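/- For every n ≥ 2: if a(n−1) mod 4 < a(n+1) mod 4 and a(n) mod 4 ≤ a(n+2) mod 4, then 4·S(n) = a(n)·a(n+1), where S(n) = Σ_{k=0}^{n} a(k). -/

import Mathlib

/-- Sum of base-`d` digits of `n`. -/
def sdig (d n : ℕ) : ℕ := (Nat.digits d n).sum

/-- `t_d(n)`: base-`d` digit sum of `n`, reduced mod `d`. -/
def td (d n : ℕ) : ℕ := sdig d n % d

/-- `a_{j,d}(n)`: n-th natural (0-indexed, increasing) with base-`d` digit sum ≡ j mod d. -/
noncomputable def agen (d j n : ℕ) : ℕ := Nat.nth (fun k => sdig d k % d = j) n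

/-- n-th odious number (binary digit sum odd), 0-indexed increasing. -/
noncomputable def odious (n : ℕ) : ℕ := Nat.nth (fun k => (Nat.digits 2 k).sum % 2 = 1) n

/-- n-th evil number (binary digit sum even), 0-indexed increasing. -/
noncomputable def evil (n : ℕ) : ℕ := Nat.nth (fun k => (Nat.digits 2 k).sum % 2 = 0) n

/-- Thue–Morse sequence: parity of the binary digit sum. -/
def tm (n : ℕ) : ℕ := (Nat.digits 2 n).sum % 2

lemma tm_le_one (n : ℕ) : tm n ≤ 1 := Nat.lt_succ_iff.mp (Nat.mod_lt _ (by norm_num))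

lemma tm_two_mul (k : ℕ) : tm (2 * k) = tm k := by
  rcases Nat.eq_zero_or_pos k with h | h
  · simp [h]
  · unfold tm
    rw [Nat.digits_def' (by norm_num : 1 < 2) (by omega)]
    simp [Nat.mul_div_cancel_left _ (by norm_num : 0 < 2), Nat.mul_mod_right]

lemma tm_two_mul_add_one (k : ℕ) : tm (2 * k + 1) = 1 - tm k := by
  unfold tm
  rw [Nat.digits_def' (by norm_num : 1 < 2) (by omega)]
  have h1 : (2 * k + 1) % 2 = 1 := by omega
  have h2 : (2 * k + 1) / 2 = k := by omega
  rw [h1, h2]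
  have := Nat.mod_lt (Nat.digits 2 k).sum (show 0 < 2 by norm_num)
  simp only [List.sum_cons]
  omega

lemma tm_pair (k : ℕ) : tm (2 * k) + tm (2 * k + 1) = 1 := by
  have := tm_two_mul k; have := tm_two_mul_add_one k; have := tm_le_one k; omega

lemma count_two_mul (m : ℕ) :
    Nat.count (fun k => (Nat.digits 2 k).sum % 2 = 1) (2 * m) = m := by
  induction m with
  | zero => simp
  | succ m ih =>
    have h : 2 * (m + 1) = (2 * m + 1) + 1 := by ring
    rw [h, Nat.count_succ, Nat.count_succ, ih]
    have hp := tm_pair m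
    simp only [tm] at hp
    split_ifs <;> omega

lemma odious_formula (n : ℕ) : odious n = 2 * n + 1 - tm n := by
  have hc := tm_le_one n
  have ha := tm_two_mul n
  have hb := tm_two_mul_add_one n
  by_cases h0 : tm n = 1
  · have hp : (Nat.digits 2 (2 * n)).sum % 2 = 1 := by show tm (2 * n) = 1; omega
    have h := Nat.nth_count (p := fun k => (Nat.digits 2 k).sum % 2 = 1) hp
    rw [count_two_mul] at h
    rw [show 2 * n + 1 - tm n = 2 * n by omega]
    exact h
  · have hp : (Nat.digits 2 (2 * n + 1)).sum % 2 = 1 := by show tm (2 * n + 1) = 1; omega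
    have h := Nat.nth_count (p := fun k => (Nat.digits 2 k).sum % 2 = 1) hp
    have hcount : Nat.count (fun k => (Nat.digits 2 k).sum % 2 = 1) (2 * n + 1) = n := by
      rw [Nat.count_succ, count_two_mul, if_neg (fun hx => by
        have : tm (2 * n) = 1 := hx; omega)]
      omega
    rw [hcount] at h
    rw [show 2 * n + 1 - tm n = 2 * n + 1 by omega]
    exact h

lemma sum_odd (N : ℕ) : ∑ k ∈ Finset.range N, (2 * k + 1) = N * N := by
  induction N with
  | zero => simp
  | succ N ih => rw [Finset.sum_range_succ, ih]; ring

lemma sum_tm (m : ℕ) : ∑ k ∈ Finset.range (2 * m), tm k = m := by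
  induction m with
  | zero => simp
  | succ m ih =>
    rw [show 2 * (m + 1) = (2 * m + 1) + 1 by ring, Finset.sum_range_succ,
      Finset.sum_range_succ, ih]
    have := tm_pair m
    omega

theorem stmt17 (n : ℕ) (hn : 2 ≤ n)
    (h1 : odious (n - 1) % 4 < odious (n + 1) % 4)
    (h2 : odious n % 4 ≤ odious (n + 2) % 4) :
    4 * ∑ k ∈ Finset.range (n + 1), odious k = odious n * odious (n + 1) := by
  rw [odious_formula (n-1), odious_formula (n+1)] at h1
  rw [odious_formula n, odious_formula (n+2)] at h2
  have key : n % 2 = 0 ∧ tm n = 1 := by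
    rcases Nat.even_or_odd n with h | h
    · obtain ⟨m, hm⟩ : ∃ m, n = 2 * m := by
        obtain ⟨m, hm⟩ := h; exact ⟨m, by omega⟩
      subst hm
      have hp := tm_pair m
      have ha := tm_two_mul m
      have hb := tm_two_mul_add_one m
      have b1 := tm_le_one (2 * m - 1)
      have b2 := tm_le_one (2 * m + 2)
      omega
    · exfalso
      obtain ⟨m, hm⟩ : ∃ m, n = 2 * m + 1 := by
        obtain ⟨m, hm⟩ := h; exact ⟨m, by omega⟩
      subst hm
      have hp1 := tm_pair m
      have hp2 := tm_pair (m + 1)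
      rw [show 2 * (m + 1) = 2 * m + 2 from by ring,
        show 2 * m + 2 + 1 = 2 * m + 3 from by ring] at hp2
      have b1 := tm_le_one (2 * m)
      have b2 := tm_le_one (2 * m + 2)
      rw [show 2 * m + 1 - 1 = 2 * m by omega] at h1
      rw [show 2 * m + 1 + 1 = 2 * m + 2 by omega] at h1
      rw [show 2 * m + 1 + 2 = 2 * m + 3 by omega] at h2
      omega
  obtain ⟨hpar, htn⟩ := key
  obtain ⟨m, hm⟩ : ∃ m, n = 2 * m := ⟨n / 2, by omega⟩
  subst hm
  have htm : tm m = 1 := by have := tm_two_mul m; omega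
  have htn1 : tm (2 * m + 1) = 0 := by
    have := tm_two_mul_add_one m; omega
  have hsum : (∑ k ∈ Finset.range (2 * m + 1), odious k)
      + (∑ k ∈ Finset.range (2 * m + 1), tm k) = (2 * m + 1) * (2 * m + 1) := by
    rw [← Finset.sum_add_distrib, ← sum_odd (2 * m + 1)]
    apply Finset.sum_congr rfl
    intro k _
    rw [odious_formula k]
    have := tm_le_one k
    omega
  have hT : ∑ k ∈ Finset.range (2 * m + 1), tm k = m + 1 := by
    rw [Finset.sum_range_succ, sum_tm, htn]
  rw [hT] at hsum
  rw [odious_formula (2 * m), odious_formula (2 * m + 1), htn, htn1]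
  have hexp : (2 * m + 1) * (2 * m + 1) = 4 * (m * m) + 4 * m + 1 := by ring
  rw [hexp] at hsum
  have hrhs : (2 * (2 * m) + 1 - 1) * (2 * (2 * m + 1) + 1 - 0) = 16 * (m * m) + 12 * m := by
    rw [Nat.sub_zero, show 2 * (2 * m) + 1 - 1 = 4 * m by omega]
    ring
  rw [hrhs]
  omega
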